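/- Let E be a Banach space, and let (T_n) be a sequence of bounded linear operators on E such that for every x ∈ E the sequence (T_n x) is Cauchy. Then for any bounded set {x_n : n ≥ 1} ⊂ E, the Hausdorff measure of noncompactness satisfies β({T_n x_n : n ≥ 1}) ≤ (limsup_{n→∞} ‖T_n‖) · β({x_n : n ≥ 1}). -/
import Mathlib

open Bornology Filter Set

/-- Hausdorff measure of noncompactness. -/
noncomputable def hmnc {E : Type*} [NormedAddCommGroup E] (Ω : Set E) : ℝ :=
  sInf {r : ℝ | 0 < r ∧ ∃ S : Finset E, Ω ⊆ ⋃ x ∈ S, Metric.ball x r}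

lemma hmnc_bddBelow {E : Type*} [NormedAddCommGroup E] (Ω : Set E) :
    BddBelow {r : ℝ | 0 < r ∧ ∃ S : Finset E, Ω ⊆ ⋃ x ∈ S, Metric.ball x r} :=
  ⟨0, fun _ hr => le_of_lt hr.1⟩

lemma hmnc_nonneg {E : Type*} [NormedAddCommGroup E] (Ω : Set E) : 0 ≤ hmnc Ω :=
  Real.sInf_nonneg (fun _ hr => le_of_lt hr.1)

lemma hmnc_set_nonempty {E : Type*} [NormedAddCommGroup E] {Ω : Set E}
    (h : IsBounded Ω) :
    {r : ℝ | 0 < r ∧ ∃ S : Finset E, Ω ⊆ ⋃ x ∈ S, Metric.ball x r}.Nonempty := by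
  obtain ⟨R, hR⟩ := isBounded_iff_forall_norm_le.mp h
  refine ⟨|R| + 1, by positivity, {0}, fun y hy => ?_⟩
  simp only [Finset.mem_singleton, Set.mem_iUnion, Metric.mem_ball]
  exact ⟨0, rfl, by
    rw [dist_zero_right]
    calc ‖y‖ ≤ R := hR y hy
    _ ≤ |R| := le_abs_self R
    _ < |R| + 1 := by linarith⟩

theorem stmt0 {E : Type*} [NormedAddCommGroup E] [NormedSpace ℝ E] [CompleteSpace E]
    (T : ℕ → E →L[ℝ] E) (hT : ∀ x : E, CauchySeq (fun n => T n x))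
    (x : ℕ → E) (hx : IsBounded (Set.range x)) :
    hmnc (Set.range fun n => T n (x n)) ≤
      (limsup (fun n => ‖T n‖) atTop) * hmnc (Set.range x) := by
  set L := limsup (fun n => ‖T n‖) atTop with hL
  set β := hmnc (Set.range x) with hβ
  -- Banach–Steinhaus: uniform bound on norms
  obtain ⟨C', hC'⟩ : ∃ C', ∀ n, ‖T n‖ ≤ C' := by
    apply banach_steinhaus
    intro y
    obtain ⟨C, hC⟩ := isBounded_iff_forall_norm_le.mp (hT y).isBounded_range
    exact ⟨C, fun n => hC _ ⟨n, rfl⟩⟩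
  have hbdd : IsBoundedUnder (· ≤ ·) atTop (fun n => ‖T n‖) :=
    Filter.isBoundedUnder_of ⟨C', hC'⟩
  have hL0 : 0 ≤ L :=
    Filter.le_limsup_of_frequently_le
      (Filter.Frequently.of_forall (fun n => norm_nonneg _)) hbdd
  have hβ0 : 0 ≤ β := hmnc_nonneg _
  -- core estimate
  have core : ∀ ε : ℝ, 0 < ε →
      hmnc (Set.range fun n => T n (x n)) ≤ (L + ε) * (β + ε) + 2 * ε := by
    intro ε hε
    classical
    -- get a cover of range x with radius r < β + ε
    have hlt : hmnc (Set.range x) < β + ε := by rw [← hβ]; linarith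
    obtain ⟨r, ⟨hr0, S, hcov⟩, hrβ⟩ :=
      (csInf_lt_iff (hmnc_bddBelow _) (hmnc_set_nonempty hx)).mp hlt
    -- eventually ‖T n‖ < L + ε
    have hev : ∀ᶠ n in atTop, ‖T n‖ < L + ε :=
      Filter.eventually_lt_of_limsup_lt (by linarith) hbdd
    obtain ⟨N1, hN1⟩ := Filter.eventually_atTop.mp hev
    -- Cauchy tails at each center
    have hch : ∀ c : E, ∃ N, ∀ n ≥ N, dist (T n c) (T N c) < ε :=
      fun c => Metric.cauchySeq_iff'.mp (hT c) ε hε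
    choose Nf hNf using hch
    set N := max N1 (S.sup Nf) with hN
    set ρ : ℝ := (L + ε) * r + 2 * ε with hρ
    have hρ0 : 0 < ρ := by
      have : 0 ≤ (L + ε) * r := mul_nonneg (by linarith) hr0.le
      positivity
    set S' : Finset E :=
      S.image (fun c => T N c) ∪ (Finset.range N).image (fun n => T n (x n)) with hS'
    have hcov' : (Set.range fun n => T n (x n)) ⊆ ⋃ c ∈ S', Metric.ball c ρ := by
      rintro _ ⟨n, rfl⟩
      simp only [Set.mem_iUnion, Metric.mem_ball]
      by_cases hn : n < N
      · refine ⟨T n (x n), ?_, by simpa using hρ0⟩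
        simp only [hS', Finset.mem_union, Finset.mem_image, Finset.mem_range]
        exact Or.inr ⟨n, hn, rfl⟩
      · push_neg at hn
        obtain ⟨c, hcS, hxc⟩ : ∃ c ∈ S, x n ∈ Metric.ball c r := by
          have := hcov ⟨n, rfl⟩
          simpa using this
        refine ⟨T N c, by
          simp only [hS', Finset.mem_union, Finset.mem_image]
          exact Or.inl ⟨c, hcS, rfl⟩, ?_⟩
        have hnNf : Nf c ≤ N := le_trans (Finset.le_sup hcS) (le_max_right _ _)
        have h1 : dist (T n c) (T (Nf c) c) < ε := hNf c n (le_trans hnNf hn)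
        have h2 : dist (T N c) (T (Nf c) c) < ε := hNf c N hnNf
        have h3 : dist (T n c) (T N c) < 2 * ε := by
          calc dist (T n c) (T N c) ≤ dist (T n c) (T (Nf c) c) + dist (T (Nf c) c) (T N c) :=
                dist_triangle _ _ _
          _ < ε + ε := by rw [dist_comm (T (Nf c) c)]; linarith
          _ = 2 * ε := by ring
        have hTn : ‖T n‖ < L + ε := hN1 n (le_trans (le_max_left _ _) hn)
        have hxcr : ‖x n - c‖ < r := by
          rw [Metric.mem_ball, dist_eq_norm] at hxc; exact hxc
        calc dist (T n (x n)) (T N c)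
            ≤ dist (T n (x n)) (T n c) + dist (T n c) (T N c) := dist_triangle _ _ _
          _ < ‖T n‖ * r + 2 * ε := by
              have : dist (T n (x n)) (T n c) ≤ ‖T n‖ * ‖x n - c‖ := by
                rw [dist_eq_norm, ← map_sub]
                exact (T n).le_opNorm _
              have h4 : ‖T n‖ * ‖x n - c‖ ≤ ‖T n‖ * r :=
                mul_le_mul_of_nonneg_left hxcr.le (norm_nonneg _)
              linarith
          _ ≤ ρ := by
              have : ‖T n‖ * r ≤ (L + ε) * r := mul_le_mul_of_nonneg_right hTn.le hr0.le
              rw [hρ]; linarith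
    have hmem : ρ ∈ {t : ℝ | 0 < t ∧ ∃ S : Finset E,
        (Set.range fun n => T n (x n)) ⊆ ⋃ c ∈ S, Metric.ball c t} := ⟨hρ0, S', hcov'⟩
    calc hmnc (Set.range fun n => T n (x n)) ≤ ρ :=
          csInf_le (hmnc_bddBelow _) hmem
      _ ≤ (L + ε) * (β + ε) + 2 * ε := by
          have : (L + ε) * r ≤ (L + ε) * (β + ε) :=
            mul_le_mul_of_nonneg_left hrβ.le (by linarith)
          rw [hρ]; linarith
  -- pass to the limit
  refine le_of_forall_pos_le_add fun δ hδ => ?_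
  set ε := min 1 (δ / (L + β + 3)) with hεdef
  have hε0 : 0 < ε := lt_min one_pos (div_pos hδ (by linarith))
  have hε1 : ε ≤ 1 := min_le_left _ _
  have hε2 : ε ≤ δ / (L + β + 3) := min_le_right _ _
  have hε3 : ε * (L + β + 3) ≤ δ := by
    rw [← le_div_iff₀ (by linarith : (0:ℝ) < L + β + 3)]
    exact hε2
  calc hmnc (Set.range fun n => T n (x n)) ≤ (L + ε) * (β + ε) + 2 * ε := core ε hε0
    _ = L * β + ε * (L + β + ε) + 2 * ε := by ring
    _ ≤ L * β + δ := by nlinarith
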